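/- If F : 2^ω → 2^ω is a bijection mapping meager sets exactly onto null sets and such that for every X ⊆ 2^ω and y ∈ 2^ω there exists z with F[X + y] = F[X] + z, then the validity of φ for the meager ideal implies the validity of φ* for the null ideal. -/

import Mathlib

open MeasureTheory Measure

noncomputable def μ : Measure (ℕ → ZMod 2) :=
  addHaarMeasure ⟨⟨Set.univ, isCompact_univ⟩, by simp⟩

theorem stmt_16 (F : (ℕ → ZMod 2) → (ℕ → ZMod 2))
    (hbij : Function.Bijective F)
    (hmap : ∀ X : Set (ℕ → ZMod 2), IsMeagre X ↔ μ (F '' X) = 0)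
    (htrans : ∀ (X : Set (ℕ → ZMod 2)) (y : ℕ → ZMod 2), ∃ z : ℕ → ZMod 2,
      F '' ((· + y) '' X) = (· + z) '' (F '' X))
    (phi : ∀ G : Set (ℕ → ZMod 2), IsMeagre G →
      ∃ G' : Set (ℕ → ZMod 2), IsMeagre G' ∧
        ∀ x₁ x₂ : ℕ → ZMod 2, ∃ x : ℕ → ZMod 2,
          ((· + x₁) '' G'ᶜ) ∪ ((· + x₂) '' G'ᶜ) ⊆ (· + x) '' Gᶜ) :
    ∀ G : Set (ℕ → ZMod 2), μ G = 0 →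
      ∃ G' : Set (ℕ → ZMod 2), μ G' = 0 ∧
        ∀ x₁ x₂ : ℕ → ZMod 2, ∃ x : ℕ → ZMod 2,
          ((· + x₁) '' G'ᶜ) ∪ ((· + x₂) '' G'ᶜ) ⊆ (· + x) '' Gᶜ := by
  have hch : ∀ v : ℕ → ZMod 2, v + v = 0 := by
    intro v; funext n
    have h2 : ∀ a : ZMod 2, a + a = 0 := by decide
    exact h2 (v n)
  have hA : ∀ u v : ℕ → ZMod 2, v + (u + v) = u := by
    intro u v; rw [add_comm u v, ← add_assoc, hch, zero_add]
  have solve : ∀ u v w : ℕ → ZMod 2, u = v + w → w = v + u := by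
    intro u v w h; rw [h, ← add_assoc, hch, zero_add]
  have hinj := hbij.injective
  -- key: F is a quasi-homomorphism
  have hc : ∀ a y : ℕ → ZMod 2, F (a + y) = F a + (F y + F 0) := by
    intro a y
    obtain ⟨z, hz⟩ := htrans {a, 0} y
    simp only [Set.image_pair, zero_add] at hz
    have h1 : F (a + y) = F a + z ∨ F (a + y) = F 0 + z := by
      have hm : F (a + y) ∈ ({F a + z, F 0 + z} : Set _) := by
        rw [← hz]; simp
      simpa using hm
    have h2 : F y = F a + z ∨ F y = F 0 + z := by
      have hm : F y ∈ ({F a + z, F 0 + z} : Set _) := by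
        rw [← hz]; simp
      simpa using hm
    rcases h1 with h1 | h1 <;> rcases h2 with h2 | h2
    · -- F(a+y) = Fa+z = Fy ⇒ a = 0
      have hay : a + y = y := hinj (h1.trans h2.symm)
      have ha : a = 0 := by
        calc a = a + (y + y) := by rw [hch, add_zero]
        _ = (a + y) + y := by rw [add_assoc]
        _ = y + y := by rw [hay]
        _ = 0 := hch y
      rw [ha, zero_add]
      exact (hA _ _).symm
    · rw [h1, solve _ _ _ h2, add_comm (F 0)]
    · rw [h1, solve _ _ _ h2]; abel
    · have hay : a + y = y := hinj (h1.trans h2.symm)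
      have ha : a = 0 := by
        calc a = a + (y + y) := by rw [hch, add_zero]
        _ = (a + y) + y := by rw [add_assoc]
        _ = y + y := by rw [hay]
        _ = 0 := hch y
      rw [ha, zero_add]
      exact (hA _ _).symm
  have himg : ∀ (A : Set (ℕ → ZMod 2)) (y : ℕ → ZMod 2),
      F '' ((· + y) '' A) = (· + (F y + F 0)) '' (F '' A) := by
    intro A y
    rw [Set.image_image, Set.image_image]
    exact Set.image_congr fun a _ => hc a y
  have csurj : ∀ w : ℕ → ZMod 2, ∃ y, F y + F 0 = w := by
    intro w
    obtain ⟨y, hy⟩ := hbij.surjective (w + F 0)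
    exact ⟨y, by rw [hy, add_assoc, hch, add_zero]⟩
  intro G hG
  set X := F ⁻¹' G with hXdef
  have hFX : F '' X = G := Set.image_preimage_eq G hbij.surjective
  have hXm : IsMeagre X := (hmap X).mpr (by rw [hFX]; exact hG)
  obtain ⟨X', hX'm, hprop⟩ := phi X hXm
  refine ⟨F '' X', (hmap X').mp hX'm, ?_⟩
  intro x₁ x₂
  obtain ⟨y₁, hy₁⟩ := csurj x₁
  obtain ⟨y₂, hy₂⟩ := csurj x₂
  obtain ⟨y, hy⟩ := hprop y₁ y₂
  refine ⟨F y + F 0, ?_⟩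
  have hsub := Set.image_mono (f := F) hy
  rw [Set.image_union, himg, himg, himg, Set.image_compl_eq hbij,
    Set.image_compl_eq hbij, hFX, hy₁, hy₂] at hsub
  exact hsub
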